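/- Let N ≥ 1 and let p = (p_i^j) be an N×N matrix with all entries strictly positive. Extend the Bethe free energy F_BP(β) = Σ_{i,j} ( β_i^j ln(β_i^j/p_i^j) − (1 − β_i^j) ln(1 − β_i^j) ) continuously to matrices β with entries in [0,1] using the convention 0·ln 0 = 0. If β* is a global minimizer of F_BP over the Birkhoff polytope of doubly stochastic N×N matrices and some entry of β* equals 0 or 1, then β* is a permutation matrix (all entries of β* are 0 or 1, with exactly one 1 in each row and each column). -/

import Mathlib

open Filter Real Finset Topology

namespace BetheAux

noncomputable def fterm (p x : ℝ) : ℝ := x * Real.log (x / p) - (1 - x) * Real.log (1 - x)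

lemma fterm_zero (p : ℝ) : fterm p 0 = 0 := by simp [fterm]

lemma slope_lim {g : ℝ → ℝ} {c : ℝ} (h : HasDerivAt g c 0) (h0 : g 0 = 0) :
    Tendsto (fun ε => g ε / ε) (𝓝[>] (0:ℝ)) (𝓝 c) := by
  have h1 := hasDerivAt_iff_tendsto_slope.mp h
  have h2 : Tendsto (slope g 0) (𝓝[>] (0:ℝ)) (𝓝 c) :=
    h1.mono_left (nhdsWithin_mono _ fun x hx => ne_of_gt hx)
  refine h2.congr fun ε => ?_
  simp [slope_def_field, h0]

lemma fterm_diff {p x : ℝ} (hp : p ≠ 0) (h0 : x ≠ 0) (h1 : (1:ℝ) - x ≠ 0) :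
    DifferentiableAt ℝ (fterm p) x := by
  have hA : DifferentiableAt ℝ (fun y : ℝ => y * Real.log (y / p)) x :=
    differentiableAt_fun_id.mul ((differentiableAt_fun_id.div_const p).log (div_ne_zero h0 hp))
  have hsub : DifferentiableAt ℝ (fun y : ℝ => 1 - y) x :=
    (differentiableAt_const 1).sub differentiableAt_fun_id
  exact hA.sub (hsub.mul (hsub.log h1))

def EData (D : ℝ → ℝ) (c : ℝ) : Prop :=
  ∃ R : ℝ → ℝ, ∃ L : ℝ, (∀ᶠ ε in 𝓝[>] (0:ℝ), D ε = c * (ε * Real.log ε) + R ε) ∧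
    Tendsto (fun ε => R ε / ε) (𝓝[>] (0:ℝ)) (𝓝 L)

lemma ev_Ioo : ∀ᶠ ε in 𝓝[>] (0:ℝ), ε ∈ Set.Ioo (0:ℝ) 1 :=
  Ioo_mem_nhdsGT_of_mem (by norm_num)

lemma hasDerivAt_one_sub_mul_log : HasDerivAt (fun ε : ℝ => (1 - ε) * Real.log (1 - ε)) (-1) 0 := by
  have hu : HasDerivAt (fun ε : ℝ => 1 - ε) (-1) 0 := (hasDerivAt_id 0).const_sub 1
  have hlog : HasDerivAt (fun ε : ℝ => Real.log (1 - ε)) (-1) 0 := by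
    have h := (Real.hasDerivAt_log (by norm_num : (1:ℝ) - 0 ≠ 0)).comp 0 hu
    exact h.congr_deriv (by norm_num)
  have := hu.mul hlog
  exact this.congr_deriv (by simp)

lemma edata_zero {p : ℝ} (hp : 0 < p) : EData (fun ε => fterm p ε - fterm p 0) 1 := by
  refine ⟨fun ε => -(ε * Real.log p) - (1 - ε) * Real.log (1 - ε), ?_, ?_, ?_⟩
  · exact -Real.log p - (-1)
  · filter_upwards [ev_Ioo] with ε hε
    rw [fterm_zero, fterm, Real.log_div (ne_of_gt hε.1) (ne_of_gt hp)]
    ring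
  · have h1 : HasDerivAt (fun ε : ℝ => -(ε * Real.log p)) (-Real.log p) 0 := by
      have := ((hasDerivAt_id 0).mul_const (Real.log p)).neg
      exact this.congr_deriv (by simp)
    have := h1.sub hasDerivAt_one_sub_mul_log
    exact slope_lim this (by simp)

lemma edata_one {p : ℝ} (hp : 0 < p) : EData (fun ε => fterm p (1 - ε) - fterm p 1) (-1) := by
  refine ⟨fun ε => (1 - ε) * Real.log (1 - ε) + ε * Real.log p, ?_, ?_, ?_⟩
  · exact -1 + Real.log p
  · filter_upwards [ev_Ioo] with ε hε
    have h1 : (1:ℝ) - ε ≠ 0 := by have := hε.2; intro h; linarith [hε.2]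
    rw [fterm, fterm, Real.log_div h1 (ne_of_gt hp), Real.log_div one_ne_zero (ne_of_gt hp)]
    simp [Real.log_one]
    ring
  · have h2 : HasDerivAt (fun ε : ℝ => ε * Real.log p) (Real.log p) 0 := by
      have := (hasDerivAt_id 0).mul_const (Real.log p)
      simpa using this
    have := hasDerivAt_one_sub_mul_log.add h2
    exact slope_lim this (by simp)

lemma edata_shift {p x : ℝ} (hp : 0 < p) (h0 : 0 < x) (h1 : x < 1) (s : ℝ) :
    EData (fun ε => fterm p (x + s * ε) - fterm p x) 0 := by
  have hin : DifferentiableAt ℝ (fun ε : ℝ => x + s * ε) 0 :=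
    (differentiableAt_const x).add ((differentiableAt_const s).mul differentiableAt_fun_id)
  have hx : x + s * 0 = x := by ring
  have hout : DifferentiableAt ℝ (fterm p) ((fun ε : ℝ => x + s * ε) 0) := by
    simp only [mul_zero, add_zero]
    exact fterm_diff (ne_of_gt hp) (ne_of_gt h0) (by linarith)
  have hg : DifferentiableAt ℝ (fun ε : ℝ => fterm p (x + s * ε) - fterm p x) 0 := by
    have := (hout.comp 0 hin).sub_const (fterm p x)
    exact this
  refine ⟨fun ε => fterm p (x + s * ε) - fterm p x, _, ?_, slope_lim hg.hasDerivAt (by simp [hx])⟩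
  filter_upwards with ε
  ring

lemma edata_minus {p x : ℝ} (hp : 0 < p) (h0 : 0 < x) (h1 : x < 1) :
    EData (fun ε => fterm p (x - ε) - fterm p x) 0 := by
  have := edata_shift hp h0 h1 (-1)
  simpa [sub_eq_add_neg, neg_one_mul] using this

lemma edata_plus {p x : ℝ} (hp : 0 < p) (h0 : 0 < x) (h1 : x < 1) :
    EData (fun ε => fterm p (x + ε) - fterm p x) 0 := by
  have := edata_shift hp h0 h1 1
  simpa using this

lemma combo {D1 D2 D3 D4 : ℝ → ℝ} {c1 c2 c3 c4 : ℝ}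
    (h1 : EData D1 c1) (h2 : EData D2 c2) (h3 : EData D3 c3) (h4 : EData D4 c4)
    (hc : 1 ≤ c1 + c2 + c3 + c4) :
    ∀ᶠ ε in 𝓝[>] (0:ℝ), D1 ε + D2 ε + D3 ε + D4 ε < 0 := by
  obtain ⟨R1, L1, he1, hL1⟩ := h1
  obtain ⟨R2, L2, he2, hL2⟩ := h2
  obtain ⟨R3, L3, he3, hL3⟩ := h3
  obtain ⟨R4, L4, he4, hL4⟩ := h4
  set K := c1 + c2 + c3 + c4 with hK
  have hKpos : 0 < K := lt_of_lt_of_le zero_lt_one hc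
  have hlog : Tendsto (fun ε : ℝ => K * Real.log ε) (𝓝[>] (0:ℝ)) atBot :=
    (tendsto_const_mul_atBot_of_pos hKpos).2 Real.tendsto_log_nhdsGT_zero
  have hRs : Tendsto (fun ε => R1 ε / ε + R2 ε / ε + R3 ε / ε + R4 ε / ε)
      (𝓝[>] (0:ℝ)) (𝓝 (L1 + L2 + L3 + L4)) := ((hL1.add hL2).add hL3).add hL4
  have hbdd : ∀ᶠ ε in 𝓝[>] (0:ℝ),
      R1 ε / ε + R2 ε / ε + R3 ε / ε + R4 ε / ε ≤ L1 + L2 + L3 + L4 + 1 :=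
    hRs.eventually (eventually_le_nhds (lt_add_one _))
  have hsum : Tendsto (fun ε : ℝ => K * Real.log ε +
      (R1 ε / ε + R2 ε / ε + R3 ε / ε + R4 ε / ε)) (𝓝[>] (0:ℝ)) atBot :=
    tendsto_atBot_add_right_of_ge' _ _ hlog hbdd
  have hneg : ∀ᶠ ε in 𝓝[>] (0:ℝ), K * Real.log ε +
      (R1 ε / ε + R2 ε / ε + R3 ε / ε + R4 ε / ε) < 0 :=
    hsum.eventually (eventually_lt_atBot 0)
  filter_upwards [he1, he2, he3, he4, hneg, self_mem_nhdsWithin] with ε e1 e2 e3 e4 hn hε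
  have hε0 : (0:ℝ) < ε := hε
  have key : D1 ε + D2 ε + D3 ε + D4 ε =
      ε * (K * Real.log ε + (R1 ε / ε + R2 ε / ε + R3 ε / ε + R4 ε / ε)) := by
    rw [e1, e2, e3, e4]
    field_simp
    ring
  rw [key]
  exact mul_neg_of_pos_of_neg hε0 hn

lemma sum_four_diff {N : ℕ} (u v : Fin N → Fin N → ℝ) (i0 i1 j0 j1 : Fin N)
    (hoff : ∀ i j, ¬((i = i0 ∨ i = i1) ∧ (j = j0 ∨ j = j1)) → u i j = v i j)
    (hi : i0 ≠ i1) (hj : j0 ≠ j1) :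
    (∑ i, ∑ j, u i j) - (∑ i, ∑ j, v i j) =
      (u i0 j0 - v i0 j0) + (u i0 j1 - v i0 j1) + (u i1 j0 - v i1 j0) + (u i1 j1 - v i1 j1) := by
  set w : Fin N → Fin N → ℝ := fun i j => u i j - v i j with hw
  have hwz : ∀ i j, ¬((i = i0 ∨ i = i1) ∧ (j = j0 ∨ j = j1)) → w i j = 0 := by
    intro i j h
    simp [hw, hoff i j h]
  have hrow : ∀ i, ∑ j, w i j = w i j0 + w i j1 := by
    intro i
    rw [← Finset.sum_subset (Finset.subset_univ ({j0, j1} : Finset (Fin N)))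
      (fun j _ hj' => hwz i j (fun hc => by
        rcases hc.2 with h1 | h1 <;> simp [h1] at hj'))]
    exact Finset.sum_pair hj
  have houter : ∑ i, ∑ j, w i j = (w i0 j0 + w i0 j1) + (w i1 j0 + w i1 j1) := by
    rw [Finset.sum_congr rfl (fun i _ => hrow i)]
    rw [← Finset.sum_subset (Finset.subset_univ ({i0, i1} : Finset (Fin N)))
      (fun i _ hi' => by
        have h0 : w i j0 = 0 := hwz i j0 (fun hc => by
          rcases hc.1 with h1 | h1 <;> simp [h1] at hi')
        have h1 : w i j1 = 0 := hwz i j1 (fun hc => by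
          rcases hc.1 with h1 | h1 <;> simp [h1] at hi')
        rw [h0, h1, add_zero])]
    rw [Finset.sum_pair hi]
  have hfin : (∑ i, ∑ j, u i j) - (∑ i, ∑ j, v i j) = ∑ i, ∑ j, w i j := by
    simp [hw, Finset.sum_sub_distrib]
  rw [hfin, houter]
  simp [hw]
  ring

lemma no_mixed {N : ℕ} (p : Fin N → Fin N → ℝ) (hp : ∀ i j, 0 < p i j)
    (β : Fin N → Fin N → ℝ) (hpos : ∀ i j, 0 ≤ β i j)
    (hrow : ∀ i, ∑ j, β i j = 1) (hcol : ∀ j, ∑ i, β i j = 1)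
    (hmin : ∀ b : Fin N → Fin N → ℝ,
      (∀ i j, 0 ≤ b i j) → (∀ i, ∑ j, b i j = 1) → (∀ j, ∑ i, b i j = 1) →
      (∑ i, ∑ j, fterm (p i j) (β i j)) ≤ ∑ i, ∑ j, fterm (p i j) (b i j))
    (i0 i1 j0 j1 : Fin N) (hi : i0 ≠ i1) (hj : j0 ≠ j1)
    (h00 : β i0 j0 = 0)
    (h01a : 0 < β i0 j1) (h01b : β i0 j1 < 1)
    (h10a : 0 < β i1 j0) (h10b : β i1 j0 ≤ 1)
    (h11a : 0 ≤ β i1 j1) (h11b : β i1 j1 < 1)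
    (hcomp : β i1 j0 = 1 → β i1 j1 = 0) : False := by
  classical
  set bb : ℝ → Fin N → Fin N → ℝ := fun ε i j => β i j +
      ((if i = i0 ∧ j = j0 then ε else 0) + (if i = i1 ∧ j = j1 then ε else 0)
        - (if i = i0 ∧ j = j1 then ε else 0) - (if i = i1 ∧ j = j0 then ε else 0)) with hbb
  have hb00 : ∀ ε, bb ε i0 j0 = ε := by intro ε; simp [hbb, hi, hj, h00]
  have hb01 : ∀ ε, bb ε i0 j1 = β i0 j1 - ε := by
    intro ε; simp [hbb, hi, hj.symm]; ring
  have hb10 : ∀ ε, bb ε i1 j0 = β i1 j0 - ε := by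
    intro ε; simp [hbb, hi.symm, hj]; ring
  have hb11 : ∀ ε, bb ε i1 j1 = β i1 j1 + ε := by
    intro ε; simp [hbb, hi.symm, hj.symm]
  have hboff : ∀ ε i j, ¬((i = i0 ∨ i = i1) ∧ (j = j0 ∨ j = j1)) → bb ε i j = β i j := by
    intro ε i j h
    have c1 : ¬(i = i0 ∧ j = j0) := fun hc => h ⟨Or.inl hc.1, Or.inl hc.2⟩
    have c2 : ¬(i = i1 ∧ j = j1) := fun hc => h ⟨Or.inr hc.1, Or.inr hc.2⟩
    have c3 : ¬(i = i0 ∧ j = j1) := fun hc => h ⟨Or.inl hc.1, Or.inr hc.2⟩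
    have c4 : ¬(i = i1 ∧ j = j0) := fun hc => h ⟨Or.inr hc.1, Or.inl hc.2⟩
    simp [hbb, c1, c2, c3, c4]
  -- pointwise decomposition convenient for sums
  have hsplit : ∀ ε i j, bb ε i j = β i j
      + ((if j = j0 then (if i = i0 then ε else 0) else 0)
      + (if j = j1 then (if i = i1 then ε else 0) else 0)
      - (if j = j1 then (if i = i0 then ε else 0) else 0)
      - (if j = j0 then (if i = i1 then ε else 0) else 0)) := by
    intro ε i j
    by_cases a1 : i = i0 <;> by_cases a2 : i = i1 <;>
      by_cases a3 : j = j0 <;> by_cases a4 : j = j1 <;>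
      simp [hbb, a1, a2, a3, a4, hi, hj, Ne.symm hi, Ne.symm hj]
  have hrowb : ∀ ε i, ∑ j, bb ε i j = 1 := by
    intro ε i
    rw [Finset.sum_congr rfl (fun j _ => hsplit ε i j)]
    rw [Finset.sum_add_distrib]
    rw [hrow i]
    simp [Finset.sum_sub_distrib, Finset.sum_add_distrib, Finset.sum_ite_eq']
  have hcolb : ∀ ε j, ∑ i, bb ε i j = 1 := by
    intro ε j
    rw [Finset.sum_congr rfl (fun i _ => hsplit ε i j)]
    rw [Finset.sum_add_distrib]
    rw [hcol j]
    simp [Finset.sum_sub_distrib, Finset.sum_add_distrib, Finset.sum_ite_eq']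
  -- nonnegativity for small ε
  have hnn : ∀ ε, 0 < ε → ε ≤ β i0 j1 → ε ≤ β i1 j0 → ∀ i j, 0 ≤ bb ε i j := by
    intro ε hε he1 he2 i j
    rcases eq_or_ne i i0 with rfl | a1
    · rcases eq_or_ne j j0 with rfl | a3
      · rw [hb00]; linarith
      · rcases eq_or_ne j j1 with rfl | a4
        · rw [hb01]; linarith
        · rw [hboff ε _ _ (fun hc => by rcases hc.2 with h | h; exact a3 h; exact a4 h)]
          exact hpos _ _
    · rcases eq_or_ne i i1 with rfl | a2
      · rcases eq_or_ne j j0 with rfl | a3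
        · rw [hb10]; linarith
        · rcases eq_or_ne j j1 with rfl | a4
          · rw [hb11]; linarith
          · rw [hboff ε _ _ (fun hc => by rcases hc.2 with h | h; exact a3 h; exact a4 h)]
            exact hpos _ _
      · rw [hboff ε _ _ (fun hc => by rcases hc.1 with h | h; exact a1 h; exact a2 h)]
        exact hpos _ _
  -- the difference of free energies
  have hΔ : ∀ ε, (∑ i, ∑ j, fterm (p i j) (bb ε i j)) - (∑ i, ∑ j, fterm (p i j) (β i j)) =
      (fterm (p i0 j0) ε - fterm (p i0 j0) 0)
      + (fterm (p i0 j1) (β i0 j1 - ε) - fterm (p i0 j1) (β i0 j1))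
      + (fterm (p i1 j0) (β i1 j0 - ε) - fterm (p i1 j0) (β i1 j0))
      + (fterm (p i1 j1) (β i1 j1 + ε) - fterm (p i1 j1) (β i1 j1)) := by
    intro ε
    rw [sum_four_diff (fun i j => fterm (p i j) (bb ε i j)) (fun i j => fterm (p i j) (β i j))
      i0 i1 j0 j1 (fun i j h => by simp only [hboff ε i j h]) hi hj]
    simp only [hb00, hb01, hb10, hb11, h00]
  -- EData for the four terms
  have e1 : EData (fun ε => fterm (p i0 j0) ε - fterm (p i0 j0) 0) 1 := edata_zero (hp i0 j0)
  have e2 : EData (fun ε => fterm (p i0 j1) (β i0 j1 - ε) - fterm (p i0 j1) (β i0 j1)) 0 :=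
    edata_minus (hp i0 j1) h01a h01b
  have e34 : ∃ c3 c4 : ℝ,
      EData (fun ε => fterm (p i1 j0) (β i1 j0 - ε) - fterm (p i1 j0) (β i1 j0)) c3 ∧
      EData (fun ε => fterm (p i1 j1) (β i1 j1 + ε) - fterm (p i1 j1) (β i1 j1)) c4 ∧
      1 ≤ 1 + 0 + c3 + c4 := by
    rcases h10b.eq_or_lt with hone | hlt
    · have h110 : β i1 j1 = 0 := hcomp hone
      refine ⟨-1, 1, ?_, ?_, by norm_num⟩
      · rw [hone]; exact edata_one (hp i1 j0)
      · rw [h110]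
        simpa using edata_zero (hp i1 j1)
    · rcases h11a.eq_or_lt with hz | hpos'
      · exact ⟨0, 1, edata_minus (hp i1 j0) h10a hlt,
          by rw [← hz]; simpa using edata_zero (hp i1 j1), by norm_num⟩
      · exact ⟨0, 0, edata_minus (hp i1 j0) h10a hlt,
          edata_plus (hp i1 j1) hpos' h11b, by norm_num⟩
  obtain ⟨c3, c4, e3, e4, hc⟩ := e34
  have hneg := combo e1 e2 e3 e4 hc
  have hsmall : ∀ᶠ ε in 𝓝[>] (0:ℝ), ε < min (β i0 j1) (β i1 j0) := by
    have hm : (0:ℝ) < min (β i0 j1) (β i1 j0) := lt_min h01a h10a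
    exact eventually_nhdsWithin_of_eventually_nhds (eventually_lt_nhds hm)
  have hfin := (hneg.and (hsmall.and self_mem_nhdsWithin)).exists
  obtain ⟨ε, hDneg, hεs, hε0⟩ := hfin
  have hε0' : (0:ℝ) < ε := hε0
  have h1 : ε ≤ β i0 j1 := le_of_lt (lt_of_lt_of_le hεs (min_le_left _ _))
  have h2 : ε ≤ β i1 j0 := le_of_lt (lt_of_lt_of_le hεs (min_le_right _ _))
  have hle := hmin (bb ε) (hnn ε hε0' h1 h2) (hrowb ε) (hcolb ε)
  have hδ := hΔ ε
  linarith [hle, hδ, hDneg]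

lemma exists_unique_one {N : ℕ} (f : Fin N → ℝ) (h01 : ∀ j, f j = 0 ∨ f j = 1)
    (hsum : ∑ j, f j = 1) : ∃! j, f j = 1 := by
  have hex : ∃ j, f j = 1 := by
    by_contra h
    push_neg at h
    have hz : ∀ j, f j = 0 := fun j => (h01 j).resolve_right (h j)
    rw [Finset.sum_congr rfl (fun j _ => hz j)] at hsum
    simp at hsum
  obtain ⟨j, hj⟩ := hex
  refine ⟨j, hj, fun j' hj' => ?_⟩
  by_contra hne
  have hnn : ∀ k, (0:ℝ) ≤ f k := fun k => by rcases h01 k with h | h <;> simp [h]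
  have hpair : ∑ k ∈ ({j', j} : Finset (Fin N)), f k = 2 := by
    rw [Finset.sum_pair hne, hj, hj']; norm_num
  have h2 : (2:ℝ) ≤ ∑ k, f k := by
    rw [← hpair]
    exact Finset.sum_le_sum_of_subset_of_nonneg (Finset.subset_univ _) (fun k _ _ => hnn k)
  rw [hsum] at h2
  linarith

end BetheAux


open BetheAux


/-- If a global minimizer `β*` of the Bethe free energy
`F_BP(β) = Σ_{i,j} (β_i^j ln(β_i^j/p_i^j) - (1-β_i^j) ln(1-β_i^j))` over the Birkhoff
polytope has some entry equal to `0` or `1`, then `β*` is a permutation matrix.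
(Terms with `β_i^j ∈ {0,1}` are automatically `0` here since `Real.log 0 = 0`,
matching the convention `0 · ln 0 = 0`.) -/
theorem bethe_boundary_minimizer_is_permutation (N : ℕ) (hN : 1 ≤ N)
    (p : Fin N → Fin N → ℝ) (hp : ∀ i j, 0 < p i j)
    (β : Fin N → Fin N → ℝ)
    (hβmem : (∀ i j, 0 ≤ β i j) ∧ (∀ i, ∑ j, β i j = 1) ∧ (∀ j, ∑ i, β i j = 1))
    (hmin : ∀ b : Fin N → Fin N → ℝ,
      (∀ i j, 0 ≤ b i j) → (∀ i, ∑ j, b i j = 1) → (∀ j, ∑ i, b i j = 1) →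
      (∑ i, ∑ j, (β i j * Real.log (β i j / p i j)
          - (1 - β i j) * Real.log (1 - β i j))) ≤
        ∑ i, ∑ j, (b i j * Real.log (b i j / p i j)
          - (1 - b i j) * Real.log (1 - b i j)))
    (hbdry : ∃ i j, β i j = 0 ∨ β i j = 1) :
    (∀ i j, β i j = 0 ∨ β i j = 1) ∧
      (∀ i, ∃! j, β i j = 1) ∧ (∀ j, ∃! i, β i j = 1) := by
  obtain ⟨hpos, hrow, hcol⟩ := hβmem
  have hmin' : ∀ b : Fin N → Fin N → ℝ,
      (∀ i j, 0 ≤ b i j) → (∀ i, ∑ j, b i j = 1) → (∀ j, ∑ i, b i j = 1) →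
      (∑ i, ∑ j, fterm (p i j) (β i j)) ≤ ∑ i, ∑ j, fterm (p i j) (b i j) := by
    intro b hb1 hb2 hb3
    simpa [fterm] using hmin b hb1 hb2 hb3
  have hle1 : ∀ i j, β i j ≤ 1 := by
    intro i j
    have h := Finset.single_le_sum (f := fun i => β i j) (fun i _ => hpos i j)
      (Finset.mem_univ i)
    rwa [hcol j] at h
  by_cases hfrac : ∃ a b, 0 < β a b ∧ β a b < 1
  · exfalso
    obtain ⟨a, b, hab0, hab1⟩ := hfrac
    by_cases hone : ∃ c d, β c d = 1
    · obtain ⟨c, d, hcd⟩ := hone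
      have hrowz : ∀ j, j ≠ d → β c j = 0 := by
        intro j hjd
        have hsub : ∑ k ∈ ({d} : Finset (Fin N)), β c k = 1 := by simp [hcd]
        have h := Finset.sum_le_sum_of_subset_of_nonneg
          (Finset.subset_univ ({j, d} : Finset (Fin N))) (fun k _ _ => hpos c k)
        rw [Finset.sum_pair hjd, hrow c] at h
        have := hpos c j
        linarith [hcd ▸ (le_refl (1:ℝ))]
      have hcolz : ∀ i, i ≠ c → β i d = 0 := by
        intro i hic
        have h := Finset.sum_le_sum_of_subset_of_nonneg
          (Finset.subset_univ ({i, c} : Finset (Fin N))) (fun k _ _ => hpos k d)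
        rw [Finset.sum_pair hic, hcol d] at h
        have := hpos i d
        linarith
      have hac : a ≠ c := by
        intro h
        subst h
        rcases eq_or_ne b d with rfl | hbd
        · rw [hcd] at hab1; linarith
        · rw [hrowz b hbd] at hab0; linarith
      have hbd : b ≠ d := by
        intro h
        subst h
        rw [hcolz a hac] at hab0; linarith
      exact no_mixed p hp β hpos hrow hcol hmin' a c d b hac (Ne.symm hbd)
        (hcolz a hac) hab0 hab1 (by rw [hcd]; norm_num) (le_of_eq hcd)
        (by rw [hrowz b hbd]) (by rw [hrowz b hbd]; norm_num)
        (fun _ => hrowz b hbd)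
    · push_neg at hone
      have hlt1 : ∀ i j, β i j < 1 := fun i j => lt_of_le_of_ne (hle1 i j) (hone i j)
      obtain ⟨c, d, hcd⟩ := hbdry
      have hcd0 : β c d = 0 := hcd.resolve_right (hone c d)
      have hrowpos : ∃ j', 0 < β c j' := by
        by_contra h
        push_neg at h
        have hz : ∀ j, β c j = 0 := fun j => le_antisymm (h j) (hpos c j)
        have := hrow c
        rw [Finset.sum_congr rfl (fun j _ => hz j)] at this
        simp at this
      have hcolpos : ∃ i', 0 < β i' d := by
        by_contra h
        push_neg at h
        have hz : ∀ i, β i d = 0 := fun i => le_antisymm (h i) (hpos i d)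
        have := hcol d
        rw [Finset.sum_congr rfl (fun i _ => hz i)] at this
        simp at this
      obtain ⟨j', hj'⟩ := hrowpos
      obtain ⟨i', hi'⟩ := hcolpos
      have hci' : c ≠ i' := by
        intro h
        rw [← h, hcd0] at hi'
        linarith
      have hdj' : d ≠ j' := by
        intro h
        rw [← h, hcd0] at hj'
        linarith
      exact no_mixed p hp β hpos hrow hcol hmin' c i' d j' hci' hdj'
        hcd0 hj' (hlt1 c j') hi' (le_of_lt (hlt1 i' d)) (hpos i' j') (hlt1 i' j')
        (fun h => absurd h (ne_of_lt (hlt1 i' d)))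
  · push_neg at hfrac
    have h01 : ∀ i j, β i j = 0 ∨ β i j = 1 := by
      intro i j
      rcases (hpos i j).eq_or_lt with h | h
      · exact Or.inl h.symm
      · exact Or.inr (le_antisymm (hle1 i j) (hfrac i j h))
    refine ⟨h01, fun i => exists_unique_one _ (fun j => h01 i j) (hrow i),
      fun j => exists_unique_one _ (fun i => h01 i j) (hcol j)⟩
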